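/- (Logarithmic orbit) Let G(t) = ln(t + 1) for t ≥ 0, and let G^n denote the n-fold iterate of G. Then G^n(1) < 3/n for all integers n ≥ 1. -/

import Mathlib

/-- `G(t) = ln(t + 1)`, the inverse of `F(t) = e^t - 1` on `[0, ∞)`. -/
noncomputable def G (t : ℝ) : ℝ := Real.log (t + 1)

lemma log_step {x : ℝ} (hx : 0 ≤ x) (hx2 : x ≤ 3/2) :
    Real.log (x + 1) ≤ 3 * x / (3 + x) := by
  have h3 : (0:ℝ) < 3 + x := by linarith
  set y := 3 * x / (3 + x) with hy
  have hy0 : 0 ≤ y := by positivity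
  have hexp : 1 + y + y ^ 2 / 2 ≤ Real.exp y := by
    have h := Real.sum_le_exp_of_nonneg hy0 3
    norm_num [Finset.sum_range_succ] at h
    nlinarith [h]
  have hmul : y * (3 + x) = 3 * x := by rw [hy]; field_simp [h3.ne']
  have hkey : x + 1 ≤ 1 + y + y ^ 2 / 2 := by
    nlinarith [sq_nonneg (3 + x), sq_nonneg y, mul_self_nonneg (y*(3+x))]
  have : x + 1 ≤ Real.exp y := by
    have := le_trans hkey hexp
    linarith
  rw [Real.log_le_iff_le_exp (by linarith)]
  exact this

lemma invariant : ∀ n : ℕ, 0 ≤ G^[n] 1 ∧ G^[n] 1 ≤ 3 / (n + 2) := by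
  intro n
  induction n with
  | zero => norm_num
  | succ n ih =>
    obtain ⟨h0, h1⟩ := ih
    have hn2 : (0:ℝ) < (n:ℝ) + 2 := by positivity
    have hle32 : G^[n] 1 ≤ 3/2 := h1.trans (by
      rw [div_le_div_iff₀ hn2 (by norm_num)]; nlinarith)
    rw [Function.iterate_succ_apply']
    set x := G^[n] 1
    constructor
    · exact Real.log_nonneg (by linarith)
    · have step := log_step h0 hle32
      have h3x : (0:ℝ) < 3 + x := by linarith
      have : 3 * x / (3 + x) ≤ 3 / ((n:ℝ) + 1 + 2) := by
        rw [div_le_div_iff₀ h3x (by positivity)]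
        have : x * ((n:ℝ) + 2) ≤ 3 := (le_div_iff₀ hn2).mp h1
        nlinarith
      calc G x ≤ 3 * x / (3 + x) := step
        _ ≤ 3 / ((n:ℝ) + 1 + 2) := this
        _ = 3 / (((n:ℕ) + 1 : ℕ) + 2) := by push_cast; ring

/-- Logarithmic orbit: `G^n(1) < 3/n` for all `n ≥ 1`. -/
theorem stmt7 : ∀ n : ℕ, 1 ≤ n → G^[n] 1 < 3 / n := by
  intro n hn
  obtain ⟨h0, h1⟩ := invariant n
  have hn1 : (1:ℝ) ≤ n := by exact_mod_cast hn
  have : (3:ℝ) / (n + 2) < 3 / n := by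
    apply div_lt_div_of_pos_left (by norm_num) (by linarith) (by linarith)
  linarith
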